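/- Let z = x + iy be a complex number with x ≠ 0, and define A(z) = (1/2)·(arctan((y+1)/x) − arctan((y−1)/x)) + (i/4)·ln((x²+(y−1)²)/(x²+(y+1)²)). Then cos(A(z)) = z·sin(A(z)), where sin and cos are the complex sine and cosine; that is, A(z) is a value of the inverse cotangent of z. Moreover, the function A is complex differentiable at z with derivative A′(z) = −1/(1+z²). -/

import Mathlib

open Complex

/-- Closed-form expression `A(w)` for the principal branch of the inverse cotangent
away from the imaginary axis. -/
noncomputable def A (w : ℂ) : ℂ :=
  ((Real.arctan ((w.im + 1) / w.re) - Real.arctan ((w.im - 1) / w.re)) / 2 : ℝ) +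
    Complex.I / 4 *
      (Real.log ((w.re ^ 2 + (w.im - 1) ^ 2) / (w.re ^ 2 + (w.im + 1) ^ 2)) : ℝ)

lemma cos_aux (x y : ℝ) (hx : x ≠ 0) :
    Real.cos (Real.arctan ((y+1)/x) - Real.arctan ((y-1)/x))
      = (x^2 + y^2 - 1) / (Real.sqrt (x^2+(y+1)^2) * Real.sqrt (x^2+(y-1)^2)) := by
  have hx2 : (0:ℝ) < x^2 := by positivity
  have hRp : (0:ℝ) < x^2+(y+1)^2 := by positivity
  have hRm : (0:ℝ) < x^2+(y-1)^2 := by positivity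
  have h1 : (1:ℝ) + ((y+1)/x)^2 = (x^2+(y+1)^2) / x^2 := by field_simp
  have h2 : (1:ℝ) + ((y-1)/x)^2 = (x^2+(y-1)^2) / x^2 := by field_simp
  rw [Real.cos_sub, Real.cos_arctan, Real.sin_arctan, Real.cos_arctan, Real.sin_arctan,
    h1, h2, Real.sqrt_div hRp.le, Real.sqrt_div hRm.le]
  set sx := Real.sqrt (x^2) with hsxdef
  set sp := Real.sqrt (x^2+(y+1)^2) with hspdef
  set sm := Real.sqrt (x^2+(y-1)^2) with hsmdef
  have hsx : sx ^ 2 = x^2 := Real.sq_sqrt hx2.le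
  have hsxne : sx ≠ 0 := by positivity
  have hspne : sp ≠ 0 := by positivity
  have hsmne : sm ≠ 0 := by positivity
  field_simp
  linear_combination (x^2+y^2-1)*hsx

lemma sin_aux (x y : ℝ) (hx : x ≠ 0) :
    Real.sin (Real.arctan ((y+1)/x) - Real.arctan ((y-1)/x))
      = 2*x / (Real.sqrt (x^2+(y+1)^2) * Real.sqrt (x^2+(y-1)^2)) := by
  have hx2 : (0:ℝ) < x^2 := by positivity
  have hRp : (0:ℝ) < x^2+(y+1)^2 := by positivity
  have hRm : (0:ℝ) < x^2+(y-1)^2 := by positivity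
  have h1 : (1:ℝ) + ((y+1)/x)^2 = (x^2+(y+1)^2) / x^2 := by field_simp
  have h2 : (1:ℝ) + ((y-1)/x)^2 = (x^2+(y-1)^2) / x^2 := by field_simp
  rw [Real.sin_sub, Real.cos_arctan, Real.sin_arctan, Real.cos_arctan, Real.sin_arctan,
    h1, h2, Real.sqrt_div hRp.le, Real.sqrt_div hRm.le]
  set sx := Real.sqrt (x^2) with hsxdef
  set sp := Real.sqrt (x^2+(y+1)^2) with hspdef
  set sm := Real.sqrt (x^2+(y-1)^2) with hsmdef
  have hsx : sx ^ 2 = x^2 := Real.sq_sqrt hx2.le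
  have hsxne : sx ≠ 0 := by positivity
  have hspne : sp ≠ 0 := by positivity
  have hsmne : sm ≠ 0 := by positivity
  field_simp
  linear_combination 2*hsx

lemma exp_aux (x y : ℝ) (hx : x ≠ 0) :
    Real.exp (-(Real.log ((x^2+(y-1)^2)/(x^2+(y+1)^2)))/2)
      = Real.sqrt (x^2+(y+1)^2) / Real.sqrt (x^2+(y-1)^2) := by
  have hRp : (0:ℝ) < x^2+(y+1)^2 := by positivity
  have hRm : (0:ℝ) < x^2+(y-1)^2 := by positivity
  have h1 : -(Real.log ((x^2+(y-1)^2)/(x^2+(y+1)^2)))/2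
      = Real.log ((x^2+(y+1)^2)/(x^2+(y-1)^2)) / 2 := by
    rw [Real.log_div hRm.ne' hRp.ne', Real.log_div hRp.ne' hRm.ne']; ring
  rw [h1, ← Real.log_sqrt (by positivity), Real.exp_log (by positivity),
    Real.sqrt_div hRp.le]

lemma A_repr (w : ℂ) :
    2 * Complex.I * A w
      = (↑(-(Real.log ((w.re^2+(w.im-1)^2)/(w.re^2+(w.im+1)^2)))/2) : ℂ)
        + (↑(Real.arctan ((w.im+1)/w.re) - Real.arctan ((w.im-1)/w.re)) : ℂ) * Complex.I := by
  simp only [A]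
  push_cast
  ring_nf
  rw [Complex.I_sq]
  ring

/-- The key identity: `exp (2 I A z) = (z + I) / (z - I)`. -/
lemma exp_two_I_A (z : ℂ) (h : z.re ≠ 0) :
    Complex.exp (2 * Complex.I * A z) = (z + Complex.I) / (z - Complex.I) := by
  set x := z.re with hxdef
  set y := z.im with hydef
  have hRp : (0:ℝ) < x^2+(y+1)^2 := by positivity
  have hRm : (0:ℝ) < x^2+(y-1)^2 := by positivity
  have hrepr := A_repr z
  rw [hrepr, Complex.exp_add, ← Complex.ofReal_exp, exp_aux x y h, Complex.exp_mul_I,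
    ← Complex.ofReal_cos, ← Complex.ofReal_sin, cos_aux x y h, sin_aux x y h]
  have hzi : z - Complex.I ≠ 0 := by
    intro hc
    apply h
    have := congrArg Complex.re hc
    simpa [← hxdef] using this
  rw [eq_div_iff hzi, ← Complex.re_add_im z, ← hxdef, ← hydef]
  set sp := Real.sqrt (x^2+(y+1)^2) with hspdef
  set sm := Real.sqrt (x^2+(y-1)^2) with hsmdef
  have hsp : sp ^ 2 = x^2+(y+1)^2 := Real.sq_sqrt hRp.le
  have hsm : sm ^ 2 = x^2+(y-1)^2 := Real.sq_sqrt hRm.le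
  have hspne : sp ≠ 0 := by positivity
  have hsmne : sm ≠ 0 := by positivity
  simp only [Complex.ext_iff, Complex.add_re, Complex.add_im, Complex.sub_re, Complex.sub_im,
    Complex.mul_re, Complex.mul_im, Complex.I_re, Complex.I_im, Complex.ofReal_re,
    Complex.ofReal_im]
  constructor
  · field_simp
    linear_combination -sp*x*hsm
  · field_simp
    linear_combination -sp*(y+1)*hsm

lemma im_two_I_A (w : ℂ) :
    (2 * Complex.I * A w).im
      = Real.arctan ((w.im+1)/w.re) - Real.arctan ((w.im-1)/w.re) := by
  rw [A_repr w]
  simp [-Complex.ofReal_arctan]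

lemma im_bound (w : ℂ) :
    -Real.pi < (2 * Complex.I * A w).im ∧ (2 * Complex.I * A w).im < Real.pi := by
  rw [im_two_I_A]
  have h1 := Real.arctan_lt_pi_div_two ((w.im+1)/w.re)
  have h2 := Real.neg_pi_div_two_lt_arctan ((w.im+1)/w.re)
  have h3 := Real.arctan_lt_pi_div_two ((w.im-1)/w.re)
  have h4 := Real.neg_pi_div_two_lt_arctan ((w.im-1)/w.re)
  constructor <;> linarith

lemma log_eq (w : ℂ) (hw : w.re ≠ 0) :
    Complex.log ((w + Complex.I) / (w - Complex.I)) = 2 * Complex.I * A w := by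
  rw [← exp_two_I_A w hw, Complex.log_exp (im_bound w).1 (im_bound w).2.le]

lemma A_eq (w : ℂ) (hw : w.re ≠ 0) :
    A w = -(Complex.I/2) * Complex.log ((w + Complex.I) / (w - Complex.I)) := by
  rw [log_eq w hw]
  linear_combination A w * Complex.I_sq

theorem stmt18 (z : ℂ) (h : z.re ≠ 0) :
    Complex.cos (A z) = z * Complex.sin (A z) ∧
      HasDerivAt A (-(1 / (1 + z ^ 2))) z := by
  have hzi : z - Complex.I ≠ 0 := by
    intro hc
    exact h (by simpa using congrArg Complex.re hc)
  have hzi' : z + Complex.I ≠ 0 := by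
    intro hc
    exact h (by simpa using congrArg Complex.re hc)
  have hsq : (1:ℂ) + z^2 ≠ 0 := by
    intro hc
    apply hzi'
    -- 1 + z^2 = (z+I)(z-I)
    have : (z + Complex.I) * (z - Complex.I) = 0 := by
      rw [← hc]; ring_nf; rw [Complex.I_sq]; ring
    rcases mul_eq_zero.mp this with h1 | h1
    · exact h1
    · exact absurd h1 hzi
  constructor
  · have hE := exp_two_I_A z h
    have h2 : (2:ℂ) * Complex.I * A z = 2 * (A z * Complex.I) := by ring
    rw [h2] at hE
    have key : Complex.exp (A z * Complex.I) ^ 2 * (z - Complex.I) = z + Complex.I := by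
      rw [← Complex.exp_nat_mul]
      push_cast
      rw [hE]
      field_simp
    have hu : Complex.exp (A z * Complex.I) ≠ 0 := Complex.exp_ne_zero _
    rw [Complex.cos, Complex.sin, neg_mul, Complex.exp_neg]
    field_simp
    linear_combination Complex.I * key + (Complex.exp (A z * Complex.I)^2 + 1) * Complex.I_sq
  · -- derivative
    have hg : HasDerivAt (fun w : ℂ => (w + Complex.I) / (w - Complex.I))
        ((1 * (z - Complex.I) - (z + Complex.I) * 1) / (z - Complex.I)^2) z := by
      exact ((hasDerivAt_id z).add_const Complex.I).div
        ((hasDerivAt_id z).sub_const Complex.I) hzi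
    have hnsq : Complex.normSq (z - Complex.I) ≠ 0 := (Complex.normSq_pos.mpr hzi).ne'
    have hmem : (z + Complex.I) / (z - Complex.I) ∈ Complex.slitPlane := by
      rw [Complex.mem_slitPlane_iff]
      right
      rw [Complex.div_im]
      simp only [Complex.add_im, Complex.add_re, Complex.sub_re, Complex.sub_im,
        Complex.I_re, Complex.I_im]
      intro hc
      apply h
      have h2 : (z.im + 1) * z.re - z.re * (z.im - 1) = 2 * z.re := by ring
      field_simp at hc
      nlinarith [hc]
    have hlog := (Complex.hasDerivAt_log hmem).comp z hg
    have hf := hlog.const_mul (-(Complex.I/2))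
    have heq : (fun w : ℂ => -(Complex.I/2) * Complex.log ((w + Complex.I) / (w - Complex.I)))
        =ᶠ[nhds z] A := by
      have hopen : IsOpen {w : ℂ | w.re ≠ 0} :=
        (isOpen_compl_singleton (x := (0:ℝ))).preimage Complex.continuous_re
      filter_upwards [hopen.mem_nhds h] with w hw
      exact (A_eq w hw).symm
    have hval : -(Complex.I/2) * (((z + Complex.I) / (z - Complex.I))⁻¹ *
        ((1 * (z - Complex.I) - (z + Complex.I) * 1) / (z - Complex.I)^2))
        = -(1 / (1 + z^2)) := by
      field_simp
      linear_combination (2*z^2) * Complex.I_sq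
    exact heq.hasDerivAt_iff.mp (hval ▸ hf)
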